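/- Let G = (V,E) be a finite simple graph and p ∈ [0,1]^V with p_v > 0 for all v and p in the Shearer set of G. Let W ⊆ U ⊆ V and v ∈ V ∖ U, and suppose Ξ_{G[W]}(p) > 0 and Ξ_{G[U]}(p) > 0. Then the one-vertex open extension probabilities satisfy Θ_{U,v}(p) ≤ Θ_{W,v}(p), i.e. Ξ_{G[U∪{v}]}(p) / Ξ_{G[U]}(p) ≤ Ξ_{G[W∪{v}]}(p) / Ξ_{G[W]}(p): the one-vertex open extension probability decreases as the conditioning set increases. -/

import Mathlib

open MeasureTheory Finset
open scoped Classical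

/-- The critical function Ξ_{G[W]}(p). -/
noncomputable def Xi {V : Type*} (G : SimpleGraph V) (W : Finset V) (p : V → ℝ) : ℝ :=
  ∑ T ∈ W.powerset,
    if ∀ u ∈ T, ∀ w ∈ T, ¬ G.Adj u w then ∏ v ∈ T, -(1 - p v) else 0

section Aux

variable {V : Type*} [DecidableEq V]

lemma Xi_filter (G : SimpleGraph V) (p : V → ℝ) (S : Finset V) (v : V) :
    Xi G (S.filter fun w => ¬ G.Adj v w) p =
    ∑ T ∈ S.powerset,
      if (∀ u ∈ T, ∀ w ∈ T, ¬ G.Adj u w) ∧ ∀ w ∈ T, ¬ G.Adj v w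
      then ∏ w ∈ T, -(1 - p w) else 0 := by
  have e1 : Xi G (S.filter fun w => ¬ G.Adj v w) p
      = ∑ T ∈ (S.filter fun w => ¬ G.Adj v w).powerset,
          if (∀ u ∈ T, ∀ w ∈ T, ¬ G.Adj u w) ∧ ∀ w ∈ T, ¬ G.Adj v w
          then ∏ w ∈ T, -(1 - p w) else 0 := by
    unfold Xi
    apply Finset.sum_congr rfl
    intro T hT
    simp only [Finset.mem_powerset] at hT
    have h2 : ∀ w ∈ T, ¬ G.Adj v w := fun w hw => (Finset.mem_filter.1 (hT hw)).2
    by_cases h : ∀ u ∈ T, ∀ w ∈ T, ¬ G.Adj u w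
    · rw [if_pos h, if_pos ⟨h, h2⟩]
    · rw [if_neg h, if_neg fun hc => h hc.1]
  rw [e1]
  apply Finset.sum_subset (Finset.powerset_mono.2 (Finset.filter_subset _ S))
  intro T hT hT'
  simp only [Finset.mem_powerset] at hT hT'
  rw [if_neg]
  rintro ⟨-, h2⟩
  exact hT' fun w hw => Finset.mem_filter.2 ⟨hT hw, h2 w hw⟩

lemma Xi_insert (G : SimpleGraph V) (p : V → ℝ) (S : Finset V) {v : V} (hv : v ∉ S) :
    Xi G (insert v S) p =
      Xi G S p - (1 - p v) * Xi G (S.filter fun w => ¬ G.Adj v w) p := by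
  have step : ∀ T ∈ S.powerset,
      (if ∀ u ∈ insert v T, ∀ w ∈ insert v T, ¬ G.Adj u w
        then ∏ w ∈ insert v T, -(1 - p w) else 0)
      = -(1 - p v) * (if (∀ u ∈ T, ∀ w ∈ T, ¬ G.Adj u w) ∧ ∀ w ∈ T, ¬ G.Adj v w
          then ∏ w ∈ T, -(1 - p w) else 0) := by
    intro T hT
    have hvT : v ∉ T := fun h => hv (Finset.mem_powerset.1 hT h)
    by_cases h : (∀ u ∈ T, ∀ w ∈ T, ¬ G.Adj u w) ∧ ∀ w ∈ T, ¬ G.Adj v w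
    · rw [if_pos, if_pos h, Finset.prod_insert hvT]
      simp only [Finset.mem_insert]
      rintro a (rfl | ha) b (rfl | hb)
      · exact G.irrefl
      · exact h.2 b hb
      · exact fun hadj => h.2 a ha (G.adj_symm hadj)
      · exact h.1 a ha b hb
    · rw [if_neg h, if_neg, mul_zero]
      intro hind
      refine h ⟨fun a ha b hb =>
        hind a (Finset.mem_insert_of_mem ha) b (Finset.mem_insert_of_mem hb),
        fun w hw => hind v (Finset.mem_insert_self _ _) w (Finset.mem_insert_of_mem hw)⟩
  calc Xi G (insert v S) p
      = (∑ T ∈ S.powerset,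
          if ∀ u ∈ T, ∀ w ∈ T, ¬ G.Adj u w then ∏ w ∈ T, -(1 - p w) else 0)
        + ∑ T ∈ S.powerset,
          (if ∀ u ∈ insert v T, ∀ w ∈ insert v T, ¬ G.Adj u w
            then ∏ w ∈ insert v T, -(1 - p w) else 0) :=
        Finset.sum_powerset_insert hv _
    _ = Xi G S p + ∑ T ∈ S.powerset,
          -(1 - p v) * (if (∀ u ∈ T, ∀ w ∈ T, ¬ G.Adj u w) ∧ ∀ w ∈ T, ¬ G.Adj v w
            then ∏ w ∈ T, -(1 - p w) else 0) := by
        rw [Finset.sum_congr rfl step]; rfl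
    _ = Xi G S p + -(1 - p v) * Xi G (S.filter fun w => ¬ G.Adj v w) p := by
        rw [← Finset.mul_sum, Xi_filter]
    _ = Xi G S p - (1 - p v) * Xi G (S.filter fun w => ¬ G.Adj v w) p := by ring

lemma Xi_insert_le (G : SimpleGraph V) (p : V → ℝ) (hp1 : ∀ v, p v ≤ 1)
    (hSh : ∀ W : Finset V, 0 ≤ Xi G W p) (S : Finset V) {v : V} (hv : v ∉ S) :
    Xi G (insert v S) p ≤ Xi G S p := by
  rw [Xi_insert G p S hv]
  have h1 := hSh (S.filter fun w => ¬ G.Adj v w)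
  have h2 : 0 ≤ 1 - p v := by linarith [hp1 v]
  nlinarith

lemma Xi_mono (G : SimpleGraph V) (p : V → ℝ) (hp1 : ∀ v, p v ≤ 1)
    (hSh : ∀ W : Finset V, 0 ≤ Xi G W p) {W U : Finset V} (hWU : W ⊆ U) :
    Xi G U p ≤ Xi G W p := by
  have key : ∀ T : Finset V, Xi G (W ∪ T) p ≤ Xi G W p := by
    intro T
    induction T using Finset.induction_on with
    | empty => simp
    | @insert t T ht ih =>
      rw [Finset.union_insert]
      by_cases h : t ∈ W ∪ T
      · rw [Finset.insert_eq_self.2 h]; exact ih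
      · exact le_trans (Xi_insert_le G p hp1 hSh _ h) ih
  have h2 := key (U \ W)
  rwa [Finset.union_sdiff_of_subset hWU] at h2

lemma Xi_key (G : SimpleGraph V) (p : V → ℝ) (hp1 : ∀ v, p v ≤ 1)
    (hSh : ∀ W : Finset V, 0 ≤ Xi G W p) :
    ∀ n : ℕ, ∀ W' W : Finset V, ∀ u : V, W' ⊆ W → u ∉ W → W.card ≤ n →
    Xi G W' p * Xi G (insert u W) p ≤ Xi G W p * Xi G (insert u W') p := by
  intro n
  induction n with
  | zero =>
    intro W' W u hsub hu hc
    have hW : W = ∅ := Finset.card_eq_zero.1 (Nat.le_zero.1 hc)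
    subst hW
    rw [Finset.subset_empty.1 hsub]
  | succ n ih =>
    intro W' W u hsub hu hc
    by_cases hWW : W' = W
    · subst hWW; exact le_rfl
    · obtain ⟨w, hwW, hwW'⟩ : ∃ w ∈ W, w ∉ W' := by
        by_contra h
        push_neg at h
        exact hWW (Finset.Subset.antisymm hsub h)
      set M := W.erase w with hMdef
      have hWM : W = insert w M := (Finset.insert_erase hwW).symm
      have hwM : w ∉ M := Finset.notMem_erase _ _
      have hW'M : W' ⊆ M := fun x hx =>
        Finset.mem_erase.2 ⟨fun h => hwW' (h ▸ hx), hsub hx⟩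
      have hMcard : M.card ≤ n := by
        have h1 : M.card = W.card - 1 := Finset.card_erase_of_mem hwW
        have h2 : 0 < W.card := Finset.card_pos.2 ⟨w, hwW⟩
        omega
      have huM : u ∉ M := fun h => hu (Finset.erase_subset _ _ h)
      have huw : u ≠ w := fun h => hu (h ▸ hwW)
      have hq : 0 ≤ 1 - p u := by linarith [hp1 u]
      -- one-step inequality
      have onestep : Xi G M p * Xi G (insert u W) p ≤ Xi G W p * Xi G (insert u M) p := by
        rw [hWM]
        have hu' : u ∉ insert w M := by rw [← hWM]; exact hu
        have exp1 := Xi_insert G p (insert w M) hu'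
        have exp2 := Xi_insert G p M huM
        have hmono : Xi G (insert w M) p ≤ Xi G M p :=
          Xi_insert_le G p hp1 hSh M hwM
        by_cases hadj : G.Adj u w
        · have hfil : (insert w M).filter (fun x => ¬ G.Adj u x)
              = M.filter (fun x => ¬ G.Adj u x) := by
            rw [Finset.filter_insert, if_neg (by simp [hadj])]
          rw [exp1, exp2, hfil]
          have h0 := hSh (M.filter fun x => ¬ G.Adj u x)
          nlinarith [mul_le_mul_of_nonneg_left hmono (mul_nonneg hq h0)]
        · have hfil : (insert w M).filter (fun x => ¬ G.Adj u x)
              = insert w (M.filter fun x => ¬ G.Adj u x) := by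
            rw [Finset.filter_insert, if_pos (by simp [hadj])]
          have ihh := ih (M.filter fun x => ¬ G.Adj u x) M w
            (Finset.filter_subset _ _) hwM hMcard
          rw [exp1, exp2, hfil]
          nlinarith [mul_le_mul_of_nonneg_left ihh hq]
      have step2 := ih W' M u hW'M huM hMcard
      by_cases hM0 : Xi G M p = 0
      · have hWle : Xi G W p ≤ Xi G M p :=
          Xi_mono G p hp1 hSh (Finset.erase_subset _ _)
        have hW0 : Xi G W p = 0 := le_antisymm (hM0 ▸ hWle) (hSh W)
        have hiW : Xi G (insert u W) p = 0 :=
          le_antisymm (hW0 ▸ Xi_insert_le G p hp1 hSh W hu) (hSh _)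
        rw [hW0, hiW, mul_zero, zero_mul]
      · have hMpos : 0 < Xi G M p := lt_of_le_of_ne (hSh M) (Ne.symm hM0)
        have h1 : Xi G M p * (Xi G W' p * Xi G (insert u W) p)
            ≤ Xi G M p * (Xi G W p * Xi G (insert u W') p) := by
          calc Xi G M p * (Xi G W' p * Xi G (insert u W) p)
              = Xi G W' p * (Xi G M p * Xi G (insert u W) p) := by ring
            _ ≤ Xi G W' p * (Xi G W p * Xi G (insert u M) p) :=
                mul_le_mul_of_nonneg_left onestep (hSh W')
            _ = Xi G W p * (Xi G W' p * Xi G (insert u M) p) := by ring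
            _ ≤ Xi G W p * (Xi G M p * Xi G (insert u W') p) :=
                mul_le_mul_of_nonneg_left step2 (hSh W)
            _ = Xi G M p * (Xi G W p * Xi G (insert u W') p) := by ring
        exact le_of_mul_le_mul_left h1 hMpos

end Aux

/-- one-vertex open extension probabilities decrease as the
conditioning set increases. -/
theorem stmt13 {V : Type*} [Fintype V] [DecidableEq V] (G : SimpleGraph V)
    (p : V → ℝ) (hp0 : ∀ v, 0 < p v) (hp1 : ∀ v, p v ≤ 1)
    (hShearer : ∀ W : Finset V, 0 ≤ Xi G W p)
    (W U : Finset V) (hWU : W ⊆ U) (v : V) (hv : v ∉ U)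
    (hW : 0 < Xi G W p) (hU : 0 < Xi G U p) :
    Xi G (insert v U) p / Xi G U p ≤ Xi G (insert v W) p / Xi G W p := by
  rw [div_le_div_iff₀ hU hW]
  have h := Xi_key G p hp1 hShearer U.card W U v hWU hv le_rfl
  nlinarith [h]
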